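/- arXiv:1902.10689 — 3 statements merged into one kernel-verified Lean document; each statement's English description precedes it below -/
import Mathlib

section
/- Let G be a finite nested group with chain of centers G = X_0 > X_1 > ⋯ > X_n ≥ 1. If N is any normal subgroup of G, then for each i with 1 ≤ i ≤ n, either [X_{i-1},G] ≤ N or N ≤ X_i. -/
open CategoryTheory

noncomputable section

/-- The kernel of the character of `V`: `{g | χ(g) = χ(1)}`. -/
def charKernel {G : Type} [Group G] (V : FDRep ℂ G) : Set G :=
  {g | V.character g = V.character 1}

/-- The center of the character of `V`: `{g | |χ(g)| = χ(1)}`. -/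
def charCenter {G : Type} [Group G] (V : FDRep ℂ G) : Set G :=
  {g | (‖V.character g‖ : ℂ) = V.character 1}

/-- The degree `χ(1)` of the character of `V`. -/
def charDegree {G : Type} [Group G] (V : FDRep ℂ G) : ℕ :=
  Module.finrank ℂ V

/-- A group is nested if the centers of its irreducible characters form a chain. -/
def Nested (G : Type) [Group G] : Prop :=
  ∀ V W : FDRep ℂ G, Simple V → Simple W →
    charCenter V ⊆ charCenter W ∨ charCenter W ⊆ charCenter V

/-- `G = X 0 > X 1 > ⋯ > X n ≥ 1` is the chain of centers for `G`: the `X i` are the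
distinct subgroups arising as centers of irreducible characters of `G`. -/
def IsChainOfCenters {G : Type} [Group G] (n : ℕ) (X : ℕ → Subgroup G) : Prop :=
  X 0 = ⊤ ∧ (∀ i ≤ n, (X i).Normal) ∧ (∀ i < n, X (i + 1) < X i) ∧
    (∀ i ≤ n, ∃ V : FDRep ℂ G, Simple V ∧ charCenter V = (X i : Set G)) ∧
    (∀ V : FDRep ℂ G, Simple V → ∃ i ≤ n, charCenter V = (X i : Set G))

/-- `N` is a minimal normal subgroup of `H`. -/
def IsMinimalNormal {H : Type*} [Group H] (N : Subgroup H) : Prop :=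
  N.Normal ∧ N ≠ ⊥ ∧ ∀ K : Subgroup H, K.Normal → K ≠ ⊥ → K ≤ N → K = N

/-- An elementary abelian `p`-group: abelian with every element of order dividing `p`. -/
def IsElementaryAbelian (p : ℕ) (H : Type*) [Group H] : Prop :=
  (∀ a b : H, a * b = b * a) ∧ ∀ a : H, a ^ p = 1


section AuxProofs
open Polynomial Module


noncomputable section

variable {M : Type} [AddCommGroup M] [Module ℂ M] [FiniteDimensional ℂ M]

lemma isRoot_of_annihilating (f : Module.End ℂ M) {q : ℂ[X]} (hq : aeval f q = 0)
    {μ : ℂ} (h : f.charpoly.IsRoot μ) : q.IsRoot μ := by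
  by_contra hqr
  have hcop : IsCoprime (X - C μ) q :=
    (Polynomial.prime_X_sub_C μ).irreducible.coprime_iff_not_dvd.mpr
      (fun hdvd => hqr (Polynomial.dvd_iff_isRoot.mp hdvd))
  obtain ⟨a, b, hab⟩ := hcop
  have h1 : aeval f a * aeval f (X - C μ) = 1 := by
    have := congrArg (aeval f) hab
    simpa [map_add, map_mul, hq] using this
  have h2 : aeval f (X - C μ) * aeval f a = 1 := by
    rw [← map_mul, mul_comm, map_mul]; exact h1
  have hunit : IsUnit (aeval f (X - C μ)) := isUnit_iff_exists.mpr ⟨aeval f a, h2, h1⟩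
  -- pass to matrices
  set b0 : Basis (Fin (finrank ℂ M)) ℂ M := Module.finBasis ℂ M with hb0
  set A : Matrix (Fin (finrank ℂ M)) (Fin (finrank ℂ M)) ℂ := LinearMap.toMatrix b0 b0 f with hA
  have hunitA : IsUnit (aeval A (X - C μ)) := by
    have := hunit.map (LinearMap.toMatrixAlgEquiv b0).toAlgHom
    rw [← Polynomial.aeval_algHom_apply] at this
    have hAeq : (LinearMap.toMatrixAlgEquiv b0).toAlgHom f = A := rfl
    rwa [hAeq] at this
  have hAX : aeval A (X - C μ) = A - Matrix.diagonal (fun _ => μ) := by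
    simp [map_sub, aeval_X, aeval_C, Matrix.algebraMap_eq_diagonal]
  have hdet0 : (Matrix.diagonal (fun _ : Fin (finrank ℂ M) => μ) - A).det = 0 := by
    have hch : A.charpoly.IsRoot μ := by
      rwa [LinearMap.charpoly_toMatrix f b0]
    have := RingHom.map_det (Polynomial.evalRingHom μ) (Matrix.charmatrix A)
    have hmap : (Polynomial.evalRingHom μ).mapMatrix (Matrix.charmatrix A)
        = Matrix.diagonal (fun _ => μ) - A := by
      ext i j
      by_cases hij : i = j
      · subst hij; simp [Matrix.charmatrix_apply_eq]
      · simp [Matrix.charmatrix_apply_ne _ _ _ hij, Matrix.diagonal_apply_ne _ hij]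
    rw [hmap] at this
    rw [← this]
    exact hch
  have : IsUnit ((aeval A (X - C μ)).det) := (Matrix.isUnit_iff_isUnit_det _).mp hunitA
  rw [hAX] at this
  have hneg : (A - Matrix.diagonal (fun _ : Fin (finrank ℂ M) => μ)).det = 0 := by
    have : A - Matrix.diagonal (fun _ : Fin (finrank ℂ M) => μ)
        = -(Matrix.diagonal (fun _ => μ) - A) := (neg_sub _ _).symm
    rw [this, Matrix.det_neg, hdet0, mul_zero]
  rw [hneg] at this
  simpa using this

end

noncomputable section
variable {M : Type} [AddCommGroup M] [Module ℂ M] [FiniteDimensional ℂ M]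

lemma charpoly_roots_pow_eq_one (f : Module.End ℂ M) {m : ℕ} (hf : f ^ m = 1)
    {μ : ℂ} (h : μ ∈ f.charpoly.roots) : μ ^ m = 1 := by
  have hr : f.charpoly.IsRoot μ := Polynomial.isRoot_of_mem_roots h
  have hq : aeval f ((X : ℂ[X]) ^ m - 1) = 0 := by
    rw [map_sub, map_pow, aeval_X, map_one, hf, sub_self]
  have := isRoot_of_annihilating f hq hr
  simpa [Polynomial.IsRoot, sub_eq_zero] using this

lemma card_roots_charpoly (f : Module.End ℂ M) :
    Multiset.card f.charpoly.roots = finrank ℂ M := by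
  rw [← LinearMap.charpoly_natDegree f]
  exact splits_iff_card_roots.mp (IsAlgClosed.splits _)

lemma trace_eq_sum_roots' (f : Module.End ℂ M) :
    LinearMap.trace ℂ M f = f.charpoly.roots.sum := by
  rw [LinearMap.trace_eq_matrix_trace ℂ (Module.finBasis ℂ M),
    Matrix.trace_eq_sum_roots_charpoly, LinearMap.charpoly_toMatrix]

lemma abs_eq_one_of_pow_eq_one {z : ℂ} {m : ℕ} (hm : m ≠ 0) (hz : z ^ m = 1) :
    ‖z‖ = 1 := by
  have h : (‖z‖) ^ m = 1 := by
    rw [← norm_pow, hz, norm_one]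
  by_contra hne
  rcases lt_or_gt_of_ne hne with hlt | hgt
  · have := pow_lt_one₀ (norm_nonneg z) hlt hm
    rw [h] at this; exact lt_irrefl _ this
  · have := one_lt_pow₀ hgt hm
    rw [h] at this; exact lt_irrefl _ this

lemma abs_trace_le (f : Module.End ℂ M) {m : ℕ} (hm : m ≠ 0) (hf : f ^ m = 1) :
    ‖LinearMap.trace ℂ M f‖ ≤ (finrank ℂ M : ℝ) := by
  rw [trace_eq_sum_roots']
  calc ‖f.charpoly.roots.sum‖
      ≤ (f.charpoly.roots.map (fun z => ‖z‖)).sum := by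
        simpa using norm_multiset_sum_le f.charpoly.roots
    _ ≤ Multiset.card (f.charpoly.roots.map (fun z => ‖z‖)) • (1:ℝ) := by
        apply Multiset.sum_le_card_nsmul
        intro x hx
        obtain ⟨z, hz, rfl⟩ := Multiset.mem_map.mp hx
        exact le_of_eq (abs_eq_one_of_pow_eq_one hm (charpoly_roots_pow_eq_one f hf hz))
    _ = (finrank ℂ M : ℝ) := by
        rw [Multiset.card_map, card_roots_charpoly, nsmul_eq_mul, mul_one]

lemma multiset_eq_of_abs_sum (R : Multiset ℂ) (h1 : ∀ z ∈ R, ‖z‖ = 1)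
    (h2 : ‖R.sum‖ = (Multiset.card R : ℝ)) :
    ∀ z ∈ R, z * (Multiset.card R : ℂ) = R.sum := by
  intro z₀ hz₀
  set t : ℂ := R.sum with ht
  set n : ℕ := Multiset.card R with hn
  have hn1 : 1 ≤ n := by
    exact Multiset.card_pos_iff_exists_mem.mpr ⟨z₀, hz₀⟩
  -- each term bound
  have hterm : ∀ z ∈ R, ((starRingEnd ℂ) t * z).re ≤ (n : ℝ) := by
    intro z hz
    calc ((starRingEnd ℂ) t * z).re ≤ ‖(starRingEnd ℂ) t * z‖ := Complex.re_le_norm _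
      _ = ‖t‖ * ‖z‖ := by rw [norm_mul, Complex.norm_conj]
      _ = (n : ℝ) := by rw [h2, h1 z hz, mul_one]
  -- total sum
  have htot : (R.map (fun z => ((starRingEnd ℂ) t * z).re)).sum = (n : ℝ) * n := by
    have e1 := Complex.reAddGroupHom.map_multiset_sum
      (R.map (fun z => (starRingEnd ℂ) t * z))
    rw [Multiset.map_map] at e1
    have e2 : (R.map (fun z => (starRingEnd ℂ) t * z)).sum = (starRingEnd ℂ) t * t := by
      rw [Multiset.sum_map_mul_left]
      simp [ht]
    rw [show (fun z => ((starRingEnd ℂ) t * z).re) = Complex.reAddGroupHom ∘ (fun z => (starRingEnd ℂ) t * z) from rfl, ← e1, e2]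
    show ((starRingEnd ℂ) t * t).re = (n:ℝ) * n
    rw [mul_comm, Complex.mul_conj]
    rw [← Complex.sq_norm, h2, Complex.ofReal_re]
    ring
  -- lower bound for z₀'s term
  have hz₀term : ((starRingEnd ℂ) t * z₀).re = (n : ℝ) := by
    have hsplit : R = z₀ ::ₘ R.erase z₀ := (Multiset.cons_erase hz₀).symm
    have hcarderase : Multiset.card (R.erase z₀) = n - 1 := by
      rw [Multiset.card_erase_of_mem hz₀]; rfl
    have hrest : (Multiset.map (fun z => ((starRingEnd ℂ) t * z).re) (R.erase z₀)).sum
        ≤ ((n:ℝ) - 1) * n := by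
      calc (Multiset.map (fun z => ((starRingEnd ℂ) t * z).re) (R.erase z₀)).sum
          ≤ Multiset.card (Multiset.map (fun z => ((starRingEnd ℂ) t * z).re) (R.erase z₀)) • (n:ℝ) := by
            apply Multiset.sum_le_card_nsmul
            intro x hx
            obtain ⟨z, hz, rfl⟩ := Multiset.mem_map.mp hx
            exact hterm z (Multiset.mem_of_mem_erase hz)
        _ = ((n:ℝ) - 1) * n := by
            rw [Multiset.card_map, hcarderase, nsmul_eq_mul, Nat.cast_sub hn1, Nat.cast_one]
    have hsum : ((starRingEnd ℂ) t * z₀).re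
        + (Multiset.map (fun z => ((starRingEnd ℂ) t * z).re) (R.erase z₀)).sum = (n:ℝ) * n := by
      rw [← htot]
      conv_rhs => rw [hsplit]
      rw [Multiset.map_cons, Multiset.sum_cons]
    have := hterm z₀ hz₀
    nlinarith [hsum, hrest, this]
  -- now conclude
  have him : ((starRingEnd ℂ) t * z₀).im = 0 := by
    have habs : ‖(starRingEnd ℂ) t * z₀‖ = (n : ℝ) := by
      rw [norm_mul, Complex.norm_conj, h2, h1 z₀ hz₀, mul_one]
    have h3 : Complex.normSq ((starRingEnd ℂ) t * z₀) = (n:ℝ)^2 := by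
      rw [← Complex.sq_norm, habs]
    rw [Complex.normSq_apply, hz₀term] at h3
    nlinarith
  have hz₀eq : (starRingEnd ℂ) t * z₀ = ((n : ℝ) : ℂ) := by
    apply Complex.ext
    · rw [hz₀term]; simp
    · rw [him]; simp
  -- multiply by t
  have hmul : t * ((starRingEnd ℂ) t * z₀) = t * ((n:ℝ):ℂ) := by rw [hz₀eq]
  have hnormsq : t * (starRingEnd ℂ) t = ((n:ℝ)^2 : ℝ) := by
    rw [Complex.mul_conj, ← Complex.sq_norm, h2]
  rw [← mul_assoc, hnormsq] at hmul
  have hne : ((n:ℝ):ℂ) ≠ 0 := by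
    simp only [ne_eq, Complex.ofReal_natCast, Nat.cast_eq_zero]
    omega
  have : ((n:ℝ):ℂ) * (((n:ℝ):ℂ) * z₀) = ((n:ℝ):ℂ) * t := by
    push_cast at hmul ⊢
    ring_nf at hmul ⊢
    linear_combination hmul
  have := mul_left_cancel₀ hne this
  rw [mul_comm] at this
  push_cast
  exact this

end

noncomputable section
variable {M : Type} [AddCommGroup M] [Module ℂ M] [FiniteDimensional ℂ M]

lemma exists_smul_of_abs_trace (f : Module.End ℂ M) {m : ℕ} (hm : m ≠ 0) (hf : f ^ m = 1)
    (habs : ‖LinearMap.trace ℂ M f‖ = (finrank ℂ M : ℝ)) :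
    ∃ ω : ℂ, f = ω • (1 : Module.End ℂ M) := by
  rcases Nat.eq_zero_or_pos (finrank ℂ M) with hd | hd
  · have : Subsingleton M := (Module.finrank_zero_iff (R := ℂ)).mp hd
    exact ⟨1, LinearMap.ext fun x => Subsingleton.elim _ _⟩
  have hnontriv : Nontrivial M := Module.finrank_pos_iff.mp hd
  set d := finrank ℂ M with hdd
  set R := f.charpoly.roots with hR
  have hcard : Multiset.card R = d := card_roots_charpoly f
  have h1 : ∀ z ∈ R, ‖z‖ = 1 :=
    fun z hz => abs_eq_one_of_pow_eq_one hm (charpoly_roots_pow_eq_one f hf hz)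
  have h2 : ‖R.sum‖ = (Multiset.card R : ℝ) := by
    rw [hcard, ← trace_eq_sum_roots' f]
    exact habs
  have hall := multiset_eq_of_abs_sum R h1 h2
  set ω : ℂ := R.sum / (d : ℂ) with hω
  have hdC : ((d : ℕ) : ℂ) ≠ 0 := Nat.cast_ne_zero.mpr (by omega)
  have hrepl : R = Multiset.replicate d ω := by
    apply Multiset.eq_replicate.mpr
    refine ⟨hcard, fun b hb => ?_⟩
    have := hall b hb
    rw [hcard] at this
    rw [hω, eq_div_iff hdC, this]
  have hcp : f.charpoly = (X - C ω) ^ d := by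
    conv_lhs => rw [(IsAlgClosed.splits _).eq_prod_roots_of_monic
      (LinearMap.charpoly_monic f)]
    rw [← hR, hrepl, Multiset.map_replicate, Multiset.prod_replicate]
  have hmindvd : minpoly ℂ f ∣ (X - C ω) ^ d := by
    rw [← hcp]
    exact LinearMap.minpoly_dvd_charpoly f
  obtain ⟨i, hid, hassoc⟩ := (dvd_prime_pow (Polynomial.prime_X_sub_C ω) d).mp hmindvd
  have hmono : minpoly ℂ f = (X - C ω) ^ i := by
    refine Polynomial.eq_of_monic_of_associated ?_ ((Polynomial.monic_X_sub_C ω).pow i) hassoc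
    exact minpoly.monic (LinearMap.isIntegral f)
  have hi0 : i ≠ 0 := by
    intro h0
    rw [h0, pow_zero] at hmono
    have := minpoly.aeval ℂ f
    rw [hmono, map_one] at this
    obtain ⟨x, hx⟩ := exists_ne (0 : M)
    have := DFunLike.congr_fun this x
    simp at this
    exact hx this
  -- minpoly divides X^m - 1
  have hmq : minpoly ℂ f ∣ (X : ℂ[X]) ^ m - 1 := by
    apply minpoly.dvd
    rw [map_sub, map_pow, aeval_X, map_one, hf, sub_self]
  have hsqfree : Squarefree ((X : ℂ[X]) ^ m - 1) := by
    have : ((X : ℂ[X]) ^ m - C 1).Separable :=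
      Polynomial.separable_X_pow_sub_C (1 : ℂ) (Nat.cast_ne_zero.mpr hm) one_ne_zero
    rw [map_one] at this
    exact this.squarefree
  have hi1 : i = 1 := by
    by_contra hne
    have hi2 : 2 ≤ i := by omega
    have : (X - C ω) * (X - C ω) ∣ (X : ℂ[X]) ^ m - 1 := by
      refine dvd_trans ?_ hmq
      rw [hmono, ← pow_two]
      exact pow_dvd_pow _ hi2
    exact Polynomial.not_isUnit_X_sub_C ω (hsqfree _ this)
  have : aeval f (minpoly ℂ f) = 0 := minpoly.aeval ℂ f
  rw [hmono, hi1, pow_one, map_sub, aeval_X, aeval_C] at this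
  refine ⟨ω, ?_⟩
  rw [sub_eq_zero] at this
  rw [this, Algebra.algebraMap_eq_smul_one]

lemma eq_one_of_trace_eq (f : Module.End ℂ M) {m : ℕ} (hm : m ≠ 0) (hf : f ^ m = 1)
    (htr : LinearMap.trace ℂ M f = (finrank ℂ M : ℂ)) : f = 1 := by
  rcases Nat.eq_zero_or_pos (finrank ℂ M) with hd | hd
  · have : Subsingleton M := (Module.finrank_zero_iff (R := ℂ)).mp hd
    exact LinearMap.ext fun x => Subsingleton.elim _ _
  obtain ⟨ω, hω⟩ := exists_smul_of_abs_trace f hm hf (by rw [htr]; simp)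
  have htr2 : LinearMap.trace ℂ M f = ω * (finrank ℂ M : ℂ) := by
    rw [hω, map_smul, LinearMap.trace_one, smul_eq_mul]
  rw [htr2] at htr
  have hdC : ((finrank ℂ M : ℕ) : ℂ) ≠ 0 := Nat.cast_ne_zero.mpr (by omega)
  have hω1 : ω = 1 := by
    field_simp at htr
    tauto
  rw [hω, hω1, one_smul]

end

noncomputable section

variable {G : Type} [Group G] [Fintype G]

/-- Restriction of a representation to an invariant submodule. -/
def subRep {M : Type} [AddCommGroup M] [Module ℂ M] (ρ : Representation ℂ G M)
    (p : Submodule ℂ M) (hp : ∀ g : G, Set.MapsTo (ρ g) p p) : Representation ℂ G p where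
  toFun g := (ρ g).restrict (hp g)
  map_one' := by
    apply LinearMap.ext; intro x
    apply Subtype.ext
    simp [LinearMap.restrict_apply]
  map_mul' g h := by
    apply LinearMap.ext; intro x
    apply Subtype.ext
    simp [LinearMap.restrict_apply]
    rfl

lemma subRep_apply {M : Type} [AddCommGroup M] [Module ℂ M] (ρ : Representation ℂ G M)
    (p : Submodule ℂ M) (hp : ∀ g : G, Set.MapsTo (ρ g) p p) (g : G) (x : p) :
    (subRep ρ p hp g x : M) = ρ g (x : M) := rfl

lemma exists_invariant_compl {M : Type} [AddCommGroup M] [Module ℂ M]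
    (ρ : Representation ℂ G M) (p : Submodule ℂ M) (hp : ∀ g : G, Set.MapsTo (ρ g) p p) :
    ∃ q : Submodule ℂ M, (∀ g : G, Set.MapsTo (ρ g) q q) ∧ IsCompl p q := by
  obtain ⟨q₀, hq₀⟩ := Submodule.exists_isCompl p
  set π₀ : M →ₗ[ℂ] M := p.subtype ∘ₗ (p.linearProjOfIsCompl q₀ hq₀) with hπ₀
  have hπ₀p : ∀ x : M, π₀ x ∈ p := fun x => (p.linearProjOfIsCompl q₀ hq₀ x).2
  have hπ₀id : ∀ x ∈ p, π₀ x = x := by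
    intro x hx
    show (p.subtype) (p.linearProjOfIsCompl q₀ hq₀ x) = x
    have : p.linearProjOfIsCompl q₀ hq₀ ((⟨x, hx⟩ : p) : M) = ⟨x, hx⟩ :=
      Submodule.linearProjOfIsCompl_apply_left hq₀ ⟨x, hx⟩
    rw [show x = ((⟨x, hx⟩ : p) : M) from rfl, this]
    rfl
  set c : ℂ := (Fintype.card G : ℂ)⁻¹ with hc
  set π : M →ₗ[ℂ] M := c • ∑ g : G, (ρ g⁻¹) ∘ₗ π₀ ∘ₗ (ρ g) with hπ
  have hcard : (Fintype.card G : ℂ) ≠ 0 := Nat.cast_ne_zero.mpr Fintype.card_ne_zero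
  have hπapp : ∀ x : M, π x = c • ∑ g : G, (ρ g⁻¹) (π₀ ((ρ g) x)) := by
    intro x
    rw [hπ]
    simp [LinearMap.sum_apply]
  have hπmem : ∀ x : M, π x ∈ p := by
    intro x
    rw [hπapp]
    exact Submodule.smul_mem _ _ (Submodule.sum_mem _ fun g _ => hp g⁻¹ (hπ₀p _))
  have hρρ : ∀ (a b : G) (y : M), ρ a (ρ b y) = ρ (a * b) y := by
    intro a b y; rw [map_mul]; rfl
  have hπid : ∀ x ∈ p, π x = x := by
    intro x hx
    rw [hπapp]
    have he : ∀ g : G, (ρ g⁻¹) (π₀ ((ρ g) x)) = x := by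
      intro g
      rw [hπ₀id _ (hp g hx), hρρ, inv_mul_cancel, map_one]
      rfl
    rw [Finset.sum_congr rfl (fun g _ => he g), Finset.sum_const, Finset.card_univ]
    rw [← Nat.cast_smul_eq_nsmul ℂ, smul_smul, hc, inv_mul_cancel₀ hcard, one_smul]
  have hπcomm : ∀ h : G, ∀ x : M, π ((ρ h) x) = (ρ h) (π x) := by
    intro h x
    rw [hπapp, hπapp, map_smul, map_sum]
    congr 1
    refine (Fintype.sum_bijective (· * h) (Group.mulRight_bijective h) _ _ (fun g => ?_))
    rw [hρρ g h x]
    rw [hρρ h (g * h)⁻¹ (π₀ ((ρ (g * h)) x))]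
    congr 2
    rw [mul_inv_rev, mul_inv_cancel_left]
  refine ⟨LinearMap.ker π, ?_, ?_⟩
  · intro g x hx
    simp only [SetLike.mem_coe, LinearMap.mem_ker] at hx ⊢
    rw [hπcomm g x, hx, map_zero]
  · constructor
    · rw [disjoint_iff]
      rw [Submodule.eq_bot_iff]
      rintro x hx
      rw [Submodule.mem_inf] at hx
      obtain ⟨hxp, hxk⟩ := hx
      rw [LinearMap.mem_ker] at hxk
      rw [← hπid x hxp, hxk]
    · rw [codisjoint_iff, eq_top_iff]
      intro x _
      rw [Submodule.mem_sup]
      refine ⟨π x, hπmem x, x - π x, ?_, by abel⟩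
      rw [LinearMap.mem_ker, map_sub, hπid _ (hπmem x), sub_self]

lemma trace_isCompl {M : Type} [AddCommGroup M] [Module ℂ M] [FiniteDimensional ℂ M]
    {p q : Submodule ℂ M} (h : IsCompl p q) (f : Module.End ℂ M)
    (hfp : Set.MapsTo f p p) (hfq : Set.MapsTo f q q) :
    LinearMap.trace ℂ M f
      = LinearMap.trace ℂ p (f.restrict hfp) + LinearMap.trace ℂ q (f.restrict hfq) := by
  classical
  set N : Bool → Submodule ℂ M := fun b => bif b then p else q with hNdef
  have hN : DirectSum.IsInternal N := by
    rw [DirectSum.isInternal_submodule_iff_isCompl N (i := true) (j := false) (by simp)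
      (by ext b; cases b <;> simp)]
    simpa [hNdef] using h
  have hf : ∀ b, Set.MapsTo f (N b) (N b) := by
    intro b; cases b
    · simpa [hNdef] using hfq
    · simpa [hNdef] using hfp
  have := LinearMap.trace_eq_sum_trace_restrict hN hf
  rw [this, Fintype.sum_bool]
  rfl

lemma complex_split {a b : ℂ} {da db : ℕ} (ha : ‖a‖ ≤ (da : ℝ))
    (hb : ‖b‖ ≤ (db : ℝ)) (hab : a + b = ((da : ℂ) + (db : ℂ))) :
    a = (da : ℂ) ∧ b = (db : ℂ) := by
  have hra : a.re ≤ (da : ℝ) := le_trans (Complex.re_le_norm a) ha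
  have hrb : b.re ≤ (db : ℝ) := le_trans (Complex.re_le_norm b) hb
  have hre : a.re + b.re = (da : ℝ) + (db : ℝ) := by
    have := congrArg Complex.re hab
    simpa using this
  have hia : a.re = (da : ℝ) := by linarith
  have hib : b.re = (db : ℝ) := by linarith
  have hima : a.im = 0 := by
    have h1 : Complex.normSq a ≤ (da : ℝ) ^ 2 := by
      rw [← Complex.sq_norm]
      nlinarith [norm_nonneg a]
    rw [Complex.normSq_apply, hia] at h1
    nlinarith
  have himb : b.im = 0 := by
    have h1 : Complex.normSq b ≤ (db : ℝ) ^ 2 := by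
      rw [← Complex.sq_norm]
      nlinarith [norm_nonneg b]
    rw [Complex.normSq_apply, hib] at h1
    nlinarith
  constructor
  · apply Complex.ext <;> simp [hia, hima]
  · apply Complex.ext <;> simp [hib, himb]

end

noncomputable section
open CategoryTheory

variable {G : Type} [Group G] [Fintype G]

lemma simple_of_irreducible {M : Type} [AddCommGroup M] [Module ℂ M] [FiniteDimensional ℂ M]
    [Nontrivial M] (ρ : Representation ℂ G M)
    (hirr : ∀ p : Submodule ℂ M, (∀ g : G, Set.MapsTo (ρ g) p p) → p = ⊥ ∨ p = ⊤) :
    Simple (FDRep.of ρ) := by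
  constructor
  intro Y f hmono
  constructor
  · intro hiso hf0
    have h1 : (0 : FDRep.of ρ ⟶ FDRep.of ρ) = 𝟙 (FDRep.of ρ) := by
      calc (0 : FDRep.of ρ ⟶ FDRep.of ρ) = CategoryTheory.inv f ≫ (0 : Y ⟶ FDRep.of ρ) :=
            (Limits.comp_zero).symm
        _ = CategoryTheory.inv f ≫ f := (congrArg (fun t => CategoryTheory.inv f ≫ t) hf0).symm
        _ = 𝟙 (FDRep.of ρ) := IsIso.inv_hom_id f
    obtain ⟨x, hx⟩ := exists_ne (0 : M)
    have h2 := congrArg Action.Hom.hom h1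
    simp only [Action.zero_hom, Action.id_hom] at h2
    have h3 := congrArg (fun (φ : (FDRep.of ρ).V ⟶ (FDRep.of ρ).V) => φ x) h2
    simp only at h3
    apply hx
    have : (0 : M) = x := by exact h3
    exact this.symm
  · intro hf0
    set φ : (Y : Type) →ₗ[ℂ] M := (f.hom.hom.hom : (Y : Type) →ₗ[ℂ] M) with hφ
    have hequiv : ∀ (g : G) (y : Y), φ (Y.ρ g y) = ρ g (φ y) := by
      intro g y
      have h := f.comm g
      have h2 := congrArg (fun (ψ : Y.V ⟶ (FDRep.of ρ).V) => ψ y) h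
      exact h2
    -- the range is invariant
    have hrange : ∀ g : G, Set.MapsTo (ρ g) (LinearMap.range φ) (LinearMap.range φ) := by
      intro g z hz
      obtain ⟨y, rfl⟩ := hz
      exact ⟨Y.ρ g y, hequiv g y⟩
    have hφ0 : φ ≠ 0 := by
      intro h0
      apply hf0
      ext1
      exact FGModuleCat.hom_ext h0
    have hsurj : LinearMap.range φ = ⊤ := by
      rcases hirr _ hrange with h | h
      · exfalso
        apply hφ0
        apply LinearMap.ext; intro y
        have : φ y ∈ LinearMap.range φ := ⟨y, rfl⟩
        rw [h] at this
        simpa using this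
      · exact h
    -- kernel is zero via mono
    have hker : ∀ g : G, Set.MapsTo (Y.ρ g) (LinearMap.ker φ : Set (Y : Type))
        (LinearMap.ker φ : Set (Y : Type)) := by
      intro g y hy
      simp only [SetLike.mem_coe, LinearMap.mem_ker] at hy ⊢
      rw [hequiv g y, hy, map_zero]
    let K : FDRep ℂ G := FDRep.of (subRep Y.ρ (LinearMap.ker φ) hker)
    let ι : K ⟶ Y := ⟨FGModuleCat.ofHom (LinearMap.ker φ).subtype, by
      intro g
      apply FGModuleCat.hom_ext
      apply LinearMap.ext; intro x
      rfl⟩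
    have hι : ι ≫ f = (0 : K ⟶ Y) ≫ f := by
      rw [Limits.zero_comp]
      ext1
      apply FGModuleCat.hom_ext
      apply LinearMap.ext
      rintro ⟨y, hy⟩
      have : φ y = 0 := hy
      exact this
    have hι0 : ι = 0 := (cancel_mono f).mp hι
    have hinj : LinearMap.ker φ = ⊥ := by
      rw [Submodule.eq_bot_iff]
      rintro y hy
      have h2 := congrArg Action.Hom.hom hι0
      have h3 := congrArg (fun (ψ : K.V ⟶ Y.V) => ψ (⟨y, hy⟩ : LinearMap.ker φ)) h2
      exact h3
    -- build the inverse
    have hbij : Function.Bijective φ :=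
      ⟨LinearMap.ker_eq_bot.mp hinj, LinearMap.range_eq_top.mp hsurj⟩
    let e : (Y : Type) ≃ₗ[ℂ] M := LinearEquiv.ofBijective φ hbij
    have he : ∀ y, e y = φ y := fun _ => rfl
    let ginv : FDRep.of ρ ⟶ Y := ⟨FGModuleCat.ofHom e.symm.toLinearMap, by
      intro g
      apply FGModuleCat.hom_ext
      apply LinearMap.ext; intro x
      apply e.injective
      show e (e.symm ((FDRep.of ρ).ρ g x)) = e (Y.ρ g (e.symm x))
      rw [e.apply_symm_apply, he, hequiv, ← he, e.apply_symm_apply]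
      rfl⟩
    refine ⟨⟨ginv, ?_, ?_⟩⟩
    · ext1
      apply FGModuleCat.hom_ext
      apply LinearMap.ext; intro y
      show e.symm (φ y) = y
      rw [← he, e.symm_apply_apply]
    · ext1
      apply FGModuleCat.hom_ext
      apply LinearMap.ext; intro x
      show φ (e.symm x) = x
      rw [← he, e.apply_symm_apply]

end

noncomputable section
open CategoryTheory Module

variable {G : Type} [Group G] [Fintype G]

lemma character_apply' (V : FDRep ℂ G) (g : G) :
    V.character g = LinearMap.trace ℂ V (V.ρ g) := rfl

lemma ρ_pow_card (V : FDRep ℂ G) (g : G) : (V.ρ g) ^ (Fintype.card G) = 1 := by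
  rw [← map_pow, pow_card_eq_one, map_one]

lemma mem_charKernel_iff {V : FDRep ℂ G} {g : G} :
    g ∈ charKernel V ↔ V.ρ g = 1 := by
  constructor
  · intro h
    have h' : V.character g = V.character 1 := h
    rw [FDRep.char_one] at h'
    exact eq_one_of_trace_eq (V.ρ g) Fintype.card_ne_zero (ρ_pow_card V g) h'
  · intro h
    show V.character g = V.character 1
    rw [character_apply' , h, FDRep.char_one, LinearMap.trace_one]

lemma mem_charCenter_scalar {V : FDRep ℂ G} {g : G} (h : g ∈ charCenter V) :
    ∃ ω : ℂ, V.ρ g = ω • (1 : Module.End ℂ V) := by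
  have h' : ((‖V.character g‖ : ℝ) : ℂ) = V.character 1 := h
  rw [FDRep.char_one] at h'
  have habs : ‖V.character g‖ = (finrank ℂ V : ℝ) := by
    exact_mod_cast h'
  exact exists_smul_of_abs_trace (V.ρ g) Fintype.card_ne_zero (ρ_pow_card V g) habs

lemma charKernel_subset_charCenter (V : FDRep ℂ G) : charKernel V ⊆ charCenter V := by
  intro g h
  have h' : V.character g = V.character 1 := h
  show ((‖V.character g‖ : ℝ) : ℂ) = V.character 1
  rw [h', FDRep.char_one]
  norm_num

open scoped commutatorElement in
lemma commutator_mem_charKernel {V : FDRep ℂ G} {x : G} (hx : x ∈ charCenter V) (g : G) :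
    ⁅x, g⁆ ∈ charKernel V := by
  obtain ⟨ω, hω⟩ := mem_charCenter_scalar hx
  apply mem_charKernel_iff.mpr
  rw [commutatorElement_def, map_mul, map_mul, map_mul]
  have hsc : ∀ f : Module.End ℂ V, V.ρ x * f = f * V.ρ x := by
    intro f
    rw [hω, ← Algebra.algebraMap_eq_smul_one]
    exact Algebra.commutes ω f
  rw [hsc (V.ρ g), mul_assoc (V.ρ g) (V.ρ x) (V.ρ x⁻¹), ← map_mul, mul_inv_cancel, map_one,
    mul_one, ← map_mul, mul_inv_cancel, map_one]

lemma exists_simple_constituent (N : Subgroup G) (g₀ : G) :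
    ∀ (d : ℕ) (M : Type) (_ : AddCommGroup M) (_ : Module ℂ M)
      (_ : FiniteDimensional ℂ M)
      (ρ : Representation ℂ G M), finrank ℂ M = d →
      (∀ x ∈ N, LinearMap.trace ℂ M (ρ x) = (finrank ℂ M : ℂ)) →
      LinearMap.trace ℂ M (ρ g₀) ≠ (finrank ℂ M : ℂ) →
      ∃ S : FDRep ℂ G, Simple S ∧ (∀ x ∈ N, x ∈ charKernel S) ∧ g₀ ∉ charKernel S := by
  intro d
  induction d using Nat.strong_induction_on with
  | _ d IH =>
  intro M instAG instMod instFD ρ hd hN hg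
  have hM : Nontrivial M := by
    by_contra h
    have hsub : Subsingleton M := not_nontrivial_iff_subsingleton.mp h
    have h1 : ρ g₀ = 1 := LinearMap.ext fun x => Subsingleton.elim _ _
    apply hg
    rw [h1, LinearMap.trace_one]
  by_cases hirr : ∀ p : Submodule ℂ M, (∀ g : G, Set.MapsTo (ρ g) p p) → p = ⊥ ∨ p = ⊤
  · refine ⟨FDRep.of ρ, simple_of_irreducible ρ hirr, ?_, ?_⟩
    · intro x hx
      show (FDRep.of ρ).character x = (FDRep.of ρ).character 1
      rw [FDRep.char_one]
      exact hN x hx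
    · intro hgk
      apply hg
      have h1 : (FDRep.of ρ).character g₀ = (FDRep.of ρ).character 1 := hgk
      rw [FDRep.char_one] at h1
      exact h1
  · push_neg at hirr
    obtain ⟨p, hpinv, hpbot, hptop⟩ := hirr
    obtain ⟨q, hqinv, hcompl⟩ := exists_invariant_compl ρ p hpinv
    have hpq : finrank ℂ p + finrank ℂ q = finrank ℂ M :=
      Submodule.finrank_add_eq_of_isCompl hcompl
    have hqbot : q ≠ ⊥ := by
      intro h
      apply hptop
      rw [h] at hcompl
      exact codisjoint_bot.mp hcompl.codisjoint
    have hdppos : 0 < finrank ℂ p := by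
      rcases Nat.eq_zero_or_pos (finrank ℂ p) with h | h
      · exact absurd (Submodule.finrank_eq_zero.mp h) hpbot
      · exact h
    have hdqpos : 0 < finrank ℂ q := by
      rcases Nat.eq_zero_or_pos (finrank ℂ q) with h | h
      · exact absurd (Submodule.finrank_eq_zero.mp h) hqbot
      · exact h
    have hdp_lt : finrank ℂ p < d := by omega
    have hdq_lt : finrank ℂ q < d := by omega
    set ρp := subRep ρ p hpinv with hρp
    set ρq := subRep ρ q hqinv with hρq
    have htr : ∀ g : G, LinearMap.trace ℂ M (ρ g)
        = LinearMap.trace ℂ p (ρp g) + LinearMap.trace ℂ q (ρq g) := by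
      intro g
      exact trace_isCompl hcompl (ρ g) (hpinv g) (hqinv g)
    have hpow : ∀ (W : Type) (_ : AddCommGroup W) (_ : Module ℂ W)
        (σ : Representation ℂ G W) (g : G), (σ g) ^ (Fintype.card G) = 1 := by
      intro W _ _ σ g
      rw [← map_pow, pow_card_eq_one, map_one]
    -- the split of the N-condition
    have hsplitN : ∀ x ∈ N, LinearMap.trace ℂ p (ρp x) = (finrank ℂ p : ℂ)
        ∧ LinearMap.trace ℂ q (ρq x) = (finrank ℂ q : ℂ) := by
      intro x hx
      apply complex_split
      · exact abs_trace_le (ρp x) Fintype.card_ne_zero (hpow _ _ _ ρp x)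
      · exact abs_trace_le (ρq x) Fintype.card_ne_zero (hpow _ _ _ ρq x)
      · rw [← htr x, hN x hx, ← hpq]
        push_cast
        ring
    by_cases hcase : LinearMap.trace ℂ p (ρp g₀) = (finrank ℂ p : ℂ)
    · -- recurse into q
      have hgq : LinearMap.trace ℂ q (ρq g₀) ≠ (finrank ℂ q : ℂ) := by
        intro h
        apply hg
        rw [htr g₀, hcase, h, ← hpq]
        push_cast
        ring
      exact IH (finrank ℂ q) hdq_lt q inferInstance inferInstance inferInstance ρq rfl
        (fun x hx => (hsplitN x hx).2) hgq
    · exact IH (finrank ℂ p) hdp_lt p inferInstance inferInstance inferInstance ρp rfl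
        (fun x hx => (hsplitN x hx).1) hcase

lemma exists_simple_sep (N : Subgroup G) (hN : N.Normal) (g₀ : G) (hg₀ : g₀ ∉ N) :
    ∃ S : FDRep ℂ G, Simple S ∧ (∀ x ∈ N, x ∈ charKernel S) ∧ g₀ ∉ charKernel S := by
  classical
  have hfq : Fintype (G ⧸ N) := Fintype.ofFinite _
  set ρ := Representation.ofMulAction ℂ G (G ⧸ N) with hρ
  have htrace : ∀ g : G, LinearMap.trace ℂ (MonoidAlgebra ℂ (G ⧸ N)) (ρ g)
      = ((Finset.univ.filter (fun a : G ⧸ N => g • a = a)).card : ℂ) := by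
    intro g
    rw [LinearMap.trace_eq_matrix_trace ℂ (MonoidAlgebra.basis (G ⧸ N) ℂ), Matrix.trace]
    rw [← Finset.sum_boole]
    apply Finset.sum_congr rfl
    intro a _
    rw [Matrix.diag_apply, LinearMap.toMatrix_apply]
    have h1 : (MonoidAlgebra.basis (G ⧸ N) ℂ : Basis (G ⧸ N) ℂ (MonoidAlgebra ℂ (G ⧸ N))) a
        = MonoidAlgebra.single a 1 := by simp
    rw [h1]
    have h2 : ρ g (MonoidAlgebra.single a 1) = MonoidAlgebra.single (g • a) 1 :=
      Representation.ofMulAction_single g a 1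
    rw [h2]
    simp [MonoidAlgebra.basis, MonoidAlgebra.single_apply, Finsupp.single_apply, eq_comm]
  have hrank : finrank ℂ (MonoidAlgebra ℂ (G ⧸ N)) = Fintype.card (G ⧸ N) := by
    simp [Module.finrank_eq_card_basis (MonoidAlgebra.basis (G ⧸ N) ℂ)]
  apply exists_simple_constituent N g₀ (finrank ℂ (MonoidAlgebra ℂ (G ⧸ N))) (MonoidAlgebra ℂ (G ⧸ N)) inferInstance
    inferInstance inferInstance ρ rfl
  · -- x ∈ N fixes everything
    intro x hx
    rw [htrace x, hrank]
    congr 1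
    rw [Finset.filter_true_of_mem, Finset.card_univ]
    intro a _
    induction a using QuotientGroup.induction_on with
    | H b =>
      show x • (QuotientGroup.mk b : G ⧸ N) = QuotientGroup.mk b
      show (QuotientGroup.mk (x * b) : G ⧸ N) = QuotientGroup.mk b
      rw [QuotientGroup.eq]
      have h2 : b⁻¹ * x⁻¹ * b ∈ N := by
        have := hN.conj_mem x⁻¹ (inv_mem hx) b⁻¹
        simpa [mul_assoc] using this
      have h3 : (x * b)⁻¹ * b = b⁻¹ * x⁻¹ * b := by group
      rw [h3]
      exact h2
  · -- g₀ moves the identity coset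
    intro h
    rw [htrace g₀, hrank] at h
    have hcardeq : (Finset.univ.filter (fun a : G ⧸ N => g₀ • a = a)).card
        = Fintype.card (G ⧸ N) := by exact_mod_cast h
    have : (Finset.univ.filter (fun a : G ⧸ N => g₀ • a = a)) = Finset.univ := by
      apply Finset.eq_univ_of_card
      rw [hcardeq]
    have h1 : g₀ • ((1 : G ⧸ N)) = (1 : G ⧸ N) := by
      have := Finset.mem_filter.mp (this ▸ Finset.mem_univ (1 : G ⧸ N))
      exact this.2
    apply hg₀
    haveI := hN
    have h2 : (QuotientGroup.mk g₀ : G ⧸ N) = (1 : G ⧸ N) := by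
      have h3 : g₀ • ((1 : G ⧸ N)) = QuotientGroup.mk (g₀ * 1) := rfl
      rw [h3, mul_one] at h1
      exact h1
    exact (QuotientGroup.eq_one_iff g₀).mp h2

end

end AuxProofs

/-- for `G` nested with chain of centers `X 0 > ⋯ > X n` and any `N ⊴ G`,
for each `1 ≤ i ≤ n` either `⁅X (i-1), G⁆ ≤ N` or `N ≤ X i`. -/
theorem normal_subgroup_dichotomy (G : Type) [Group G] [Fintype G]
    (n : ℕ) (X : ℕ → Subgroup G) (hX : IsChainOfCenters n X)
    (N : Subgroup G) (hN : N.Normal) :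
    ∀ i < n, ⁅X i, (⊤ : Subgroup G)⁆ ≤ N ∨ N ≤ X (i + 1) := by
  obtain ⟨hX0, hXnormal, hXlt, hXex, hXall⟩ := hX
  have hmono : ∀ a b, a ≤ b → b ≤ n → X b ≤ X a := by
    have key : ∀ m a, a + m ≤ n → X (a + m) ≤ X a := by
      intro m
      induction m with
      | zero => intro a _; simp
      | succ m ih =>
        intro a h
        have h1 : X (a + m + 1) ≤ X (a + m) := le_of_lt (hXlt (a + m) (by omega))
        have h2 : X (a + m) ≤ X a := ih a (by omega)
        calc X (a + (m + 1)) = X (a + m + 1) := by ring_nf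
          _ ≤ X (a + m) := h1
          _ ≤ X a := h2
    intro a b hab hbn
    have : b = a + (b - a) := by omega
    rw [this]
    exact key (b - a) a (by omega)
  intro i hi
  by_cases hNle : N ≤ X (i + 1)
  · right; exact hNle
  · left
    rw [Subgroup.commutator_le]
    intro x hx g _
    by_contra hxgN
    obtain ⟨S, hS, hSN, hSg⟩ := exists_simple_sep N hN _ hxgN
    obtain ⟨j, hjn, hjeq⟩ := hXall S hS
    have hNsub : ∀ y ∈ N, y ∈ X j := by
      intro y hy
      have h1 : y ∈ charCenter S := charKernel_subset_charCenter S (hSN y hy)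
      rw [hjeq] at h1
      exact h1
    have hij : j ≤ i := by
      by_contra hj
      push_neg at hj
      exact hNle (fun y hy => (hmono (i + 1) j hj hjn) (hNsub y hy))
    have hxc : x ∈ charCenter S := by
      rw [hjeq]
      exact hmono j i hij (le_of_lt hi) hx
    exact hSg (commutator_mem_charKernel hxc g)
end
end

section
/- Let G be a finite nilpotent group such that the set of kernels of the irreducible complex characters of G is totally ordered by inclusion. Then G is a cyclic p-group for some prime p (in particular G is abelian and cyclic, and its order is a prime power). -/
open CategoryTheory

noncomputable section

/-- The one-dimensional representation attached to a homomorphism `G →* ℂˣ`. -/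
def rep1Aux {G : Type} [Group G] (φ : G →* ℂˣ) : Representation ℂ G ℂ :=
  ((algebraMap ℂ (Module.End ℂ ℂ)).toMonoidHom).comp ((Units.coeHom ℂ).comp φ)

theorem char_rep1Aux {G : Type} [Group G] (φ : G →* ℂˣ) (g : G) :
    (FDRep.of (rep1Aux φ)).character g = (φ g : ℂ) := by
  have h : (FDRep.of (rep1Aux φ)).ρ g = algebraMap ℂ (Module.End ℂ ℂ) (φ g : ℂ) := rfl
  rw [FDRep.character, h, Module.algebraMap_end_eq_smul_id, map_smul]
  show (φ g : ℂ) • (LinearMap.trace ℂ ℂ) LinearMap.id = _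
  rw [LinearMap.trace_id, Module.finrank_self]
  simp

theorem simple_of_finrank_one_aux {G : Type} [Group G] (V : FDRep ℂ G)
    (h : Module.finrank ℂ V = 1) : Simple V := by
  constructor
  intro Y f hf
  constructor
  · intro hiso h0
    have h1 : (𝟙 V : V ⟶ V) = 0 := by
      rw [h0] at hiso
      rw [← IsIso.inv_hom_id (0 : Y ⟶ V), Limits.comp_zero]
    have h2 := congrArg (fun (φ : V ⟶ V) => φ.hom) h1
    have h3 : ∀ v : V, v = 0 := by
      intro v
      have := congrArg (fun (ψ : V.V ⟶ V.V) => ψ v) h2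
      exact this.trans rfl
    have h4 : Module.finrank ℂ V = 0 := by
      have : Subsingleton V := ⟨fun a b => by rw [h3 a, h3 b]⟩
      exact Module.finrank_zero_of_subsingleton
    omega
  · intro hne
    have hmono : Mono ((forget₂ (FGModuleCat ℂ) (ModuleCat ℂ)).map
        ((Action.forget _ _).map f)) := inferInstance
    have hinj : Function.Injective (f.hom.hom.hom : Y.V →ₗ[ℂ] V.V) :=
      (ModuleCat.mono_iff_injective _).1 hmono
    have hne' : (f.hom.hom.hom : Y.V →ₗ[ℂ] V.V) ≠ 0 := by
      intro h0
      apply hne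
      ext v
      exact congrFun (congrArg (fun (φ : Y.V →ₗ[ℂ] V.V) => ⇑φ) h0) v
    have hsurj : Function.Surjective (f.hom.hom.hom : Y.V →ₗ[ℂ] V.V) := by
      rw [← LinearMap.range_eq_top]
      have hso : IsSimpleOrder (Submodule ℂ V) := is_simple_module_of_finrank_eq_one h
      rcases hso.eq_bot_or_eq_top (LinearMap.range (f.hom.hom.hom : Y.V →ₗ[ℂ] V.V)) with h' | h'
      · exfalso; apply hne'; rw [← LinearMap.range_eq_bot]; exact h'
      · exact h'
    haveI : IsIso ((forget (ModuleCat ℂ)).map ((forget₂ (FGModuleCat ℂ) (ModuleCat ℂ)).map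
        ((Action.forget _ _).map f))) := (isIso_iff_bijective _).2 ⟨hinj, hsurj⟩
    haveI : IsIso ((forget₂ (FGModuleCat ℂ) (ModuleCat ℂ)).map ((Action.forget _ _).map f)) :=
      isIso_of_reflects_iso _ (forget (ModuleCat ℂ))
    haveI : IsIso f.hom :=
      isIso_of_fully_faithful (forget₂ (FGModuleCat ℂ) (ModuleCat ℂ)) ((Action.forget _ _).map f)
    infer_instance

/-- Every normal maximal subgroup is the kernel of an irreducible (1-dimensional) character. -/
theorem exists_simple_charKernel_aux {G : Type} [Group G] [Fintype G] {M : Subgroup G}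
    (hM : IsCoatom M) [hMn : M.Normal] :
    ∃ V : FDRep ℂ G, Simple V ∧ charKernel V = (M : Set G) := by
  obtain ⟨g₀, hg₀⟩ : ∃ g, g ∉ M := by
    by_contra h
    push_neg at h
    exact hM.1 ((Subgroup.eq_top_iff' M).2 h)
  set Q := G ⧸ M with hQ
  have ha : (QuotientGroup.mk g₀ : Q) ≠ 1 := fun h => hg₀ ((QuotientGroup.eq_one_iff g₀).1 h)
  have hdich : ∀ H : Subgroup Q, H = ⊥ ∨ H = ⊤ := by
    intro H
    rcases eq_or_ne (Subgroup.comap (QuotientGroup.mk' M) H) ⊤ with h | h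
    · right
      have := congrArg (Subgroup.map (QuotientGroup.mk' M)) h
      rwa [Subgroup.map_comap_eq_self_of_surjective (QuotientGroup.mk'_surjective M),
        Subgroup.map_top_of_surjective _ (QuotientGroup.mk'_surjective M)] at this
    · left
      have hle : M ≤ Subgroup.comap (QuotientGroup.mk' M) H := by
        intro x hx
        show QuotientGroup.mk' M x ∈ H
        have : QuotientGroup.mk' M x = 1 := (QuotientGroup.eq_one_iff x).2 hx
        rw [this]; exact H.one_mem
      have hcm : Subgroup.comap (QuotientGroup.mk' M) H = M := by
        by_contra hne
        exact h (hM.2 _ (lt_of_le_of_ne hle (Ne.symm hne)))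
      rw [eq_bot_iff]
      intro x hx
      obtain ⟨y, rfl⟩ := QuotientGroup.mk'_surjective M x
      have : y ∈ M := by rw [← hcm]; exact hx
      exact Subgroup.mem_bot.2 ((QuotientGroup.eq_one_iff y).2 this)
  have hcycQ : IsCyclic Q := by
    have hz : Subgroup.zpowers (QuotientGroup.mk g₀ : Q) = ⊤ := by
      rcases hdich (Subgroup.zpowers (QuotientGroup.mk g₀ : Q)) with h | h
      · exact absurd (Subgroup.mem_bot.1 (h ▸ Subgroup.mem_zpowers _)) ha
      · exact h
    have hmem : ∀ x : Q, x ∈ Subgroup.zpowers (QuotientGroup.mk g₀ : Q) := fun x => by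
      rw [hz]; trivial
    exact ⟨⟨_, hmem⟩⟩
  letI : CommGroup Q := IsCyclic.commGroup
  haveI : NeZero ((Monoid.exponent Q : ℂ)) :=
    ⟨Nat.cast_ne_zero.2 Monoid.exponent_ne_zero_of_finite⟩
  obtain ⟨χ, hχ⟩ := CommGroup.exists_apply_ne_one_of_hasEnoughRootsOfUnity Q ℂ ha
  have hkerχ : ∀ x : Q, χ x = 1 → x = 1 := by
    intro x hx
    rcases hdich (MonoidHom.ker χ) with h | h
    · exact Subgroup.mem_bot.1 (h ▸ (MonoidHom.mem_ker.2 hx : x ∈ MonoidHom.ker χ))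
    · exact absurd (MonoidHom.mem_ker.1 (h ▸ Subgroup.mem_top _ :
        (QuotientGroup.mk g₀ : Q) ∈ MonoidHom.ker χ)) hχ
  set φ : G →* ℂˣ := χ.comp (QuotientGroup.mk' M) with hφ
  refine ⟨FDRep.of (rep1Aux φ), simple_of_finrank_one_aux _ (Module.finrank_self ℂ), ?_⟩
  ext g
  show (FDRep.of (rep1Aux φ)).character g = (FDRep.of (rep1Aux φ)).character 1 ↔ g ∈ M
  rw [char_rep1Aux, char_rep1Aux, map_one, Units.val_one]
  constructor
  · intro h
    have : φ g = 1 := Units.ext (by simpa using h)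
    have h1 : χ (QuotientGroup.mk g : Q) = 1 := this
    have := hkerχ _ h1
    exact (QuotientGroup.eq_one_iff g).1 this
  · intro h
    have : (QuotientGroup.mk' M) g = 1 := (QuotientGroup.eq_one_iff g).2 h
    simp [hφ, MonoidHom.comp_apply, this]

/-- a finite nilpotent group whose irreducible character kernels form a
chain is a cyclic `p`-group for some prime `p`. -/
theorem nilpotent_kernels_chain_cyclic (G : Type) [Group G] [Fintype G]
    (hnil : Group.IsNilpotent G)
    (hker : ∀ V W : FDRep ℂ G, Simple V → Simple W →
      charKernel V ⊆ charKernel W ∨ charKernel W ⊆ charKernel V) :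
    IsCyclic G ∧ ∃ p : ℕ, p.Prime ∧ IsPGroup p G := by
  rcases subsingleton_or_nontrivial G with hsub | hnt
  · have h1 : ∀ x : G, x ∈ Subgroup.zpowers (1 : G) := fun x => by
      rw [Subsingleton.elim x 1]; exact Subgroup.one_mem _
    exact ⟨⟨⟨1, h1⟩⟩, 2, Nat.prime_two, fun g => ⟨0, Subsingleton.elim _ _⟩⟩
  · have hnorm : ∀ M : Subgroup G, IsCoatom M → M.Normal := fun M hm =>
      Subgroup.NormalizerCondition.normal_of_coatom M (normalizerCondition_of_isNilpotent (G := G)) hm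
    have huniq : ∀ M₁ M₂ : Subgroup G, IsCoatom M₁ → IsCoatom M₂ → M₁ = M₂ := by
      intro M₁ M₂ h1 h2
      haveI := hnorm M₁ h1
      haveI := hnorm M₂ h2
      obtain ⟨V₁, hs1, hk1⟩ := exists_simple_charKernel_aux h1
      obtain ⟨V₂, hs2, hk2⟩ := exists_simple_charKernel_aux h2
      have key : M₁ ≤ M₂ ∨ M₂ ≤ M₁ := by
        rcases hker V₁ V₂ hs1 hs2 with h | h
        · left; rw [hk1, hk2] at h; exact h
        · right; rw [hk1, hk2] at h; exact h
      rcases key with h | h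
      · by_contra hne
        exact h2.1 (h1.2 M₂ (lt_of_le_of_ne h hne))
      · by_contra hne
        exact (h1.1 (h2.2 M₁ (lt_of_le_of_ne h (Ne.symm hne))))
    obtain ⟨M, hM⟩ : ∃ M : Subgroup G, IsCoatom M := by
      rcases eq_top_or_exists_le_coatom (⊥ : Subgroup G) with h | ⟨M, hM, _⟩
      · exfalso
        obtain ⟨x, y, hxy⟩ := hnt
        apply hxy
        have hx : x ∈ (⊥ : Subgroup G) := h ▸ Subgroup.mem_top x
        have hy : y ∈ (⊥ : Subgroup G) := h ▸ Subgroup.mem_top y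
        rw [Subgroup.mem_bot.1 hx, Subgroup.mem_bot.1 hy]
      · exact ⟨M, hM⟩
    obtain ⟨g, hg⟩ : ∃ g : G, g ∉ M := by
      by_contra h
      push_neg at h
      exact hM.1 ((Subgroup.eq_top_iff' M).2 h)
    have hgen : Subgroup.zpowers g = ⊤ := by
      rcases eq_top_or_exists_le_coatom (Subgroup.zpowers g) with h | ⟨M', hM', hle⟩
      · exact h
      · exfalso
        apply hg
        rw [← huniq M' M hM' hM]
        exact hle (Subgroup.mem_zpowers g)
    have hmemG : ∀ x : G, x ∈ Subgroup.zpowers g := fun x => by rw [hgen]; trivial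
    have hcyc : IsCyclic G := ⟨⟨g, hmemG⟩⟩
    refine ⟨hcyc, ?_⟩
    set n := Nat.card G with hn
    have hn0 : n ≠ 0 := Nat.card_pos.ne'
    have hn1 : n ≠ 1 := by
      intro h1
      obtain ⟨hsub, -⟩ := Nat.card_eq_one_iff_unique.1 h1
      exact false_of_nontrivial_of_subsingleton G
    have horder : orderOf g = n := by
      rw [← Nat.card_zpowers, hgen, Subgroup.card_top]
    have key : ∀ q : ℕ, q.Prime → q ∣ n → Nat.card M = n / q := by
      intro q hq hdvd
      set H := Subgroup.zpowers (g ^ q) with hH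
      have hcardH : Nat.card H = n / q := by
        rw [hH, Nat.card_zpowers, orderOf_pow, horder, Nat.gcd_eq_right hdvd]
      have hqle : q ≤ n := Nat.le_of_dvd (Nat.pos_of_ne_zero hn0) hdvd
      have hnq0 : n / q ≠ 0 := (Nat.div_pos hqle hq.pos).ne'
      have hHcoatom : IsCoatom H := by
        constructor
        · intro htop
          rw [htop, Subgroup.card_top] at hcardH
          have : n / q < n := Nat.div_lt_self (Nat.pos_of_ne_zero hn0) hq.one_lt
          omega
        · intro K hK
          have h1 : (n / q) ∣ Nat.card K := hcardH ▸ Subgroup.card_dvd_of_le hK.le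
          have h2 : Nat.card K ∣ n := Subgroup.card_subgroup_dvd_card K
          have h3 : Nat.card K ≠ n / q := fun he =>
            hK.ne (Subgroup.eq_of_le_of_card_ge hK.le (by rw [he, hcardH]))
          obtain ⟨m, hm⟩ := h1
          have hmq : m ∣ q := by
            have hdd : (n / q) * m ∣ (n / q) * q := by
              rw [← hm, Nat.div_mul_cancel hdvd]; exact h2
            exact (Nat.mul_dvd_mul_iff_left (Nat.pos_of_ne_zero hnq0)).1 hdd
          rcases hq.eq_one_or_self_of_dvd m hmq with h | h
          · exfalso; apply h3; rw [hm, h, mul_one]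
          · have hKn : Nat.card K = n := by rw [hm, h, Nat.div_mul_cancel hdvd]
            exact Subgroup.eq_top_of_card_eq _ hKn
      rw [← huniq H M hHcoatom hM]
      exact hcardH
    obtain ⟨p, hp, hpd⟩ : ∃ p, p.Prime ∧ p ∣ n :=
      ⟨n.minFac, Nat.minFac_prime hn1, Nat.minFac_dvd n⟩
    refine ⟨p, hp, IsPGroup.of_card (Nat.eq_prime_pow_of_unique_prime_dvd hn0 ?_)⟩
    intro d hd hdn
    have h1 := key d hd hdn
    have h2 := key p hp hpd
    have hdp : n / d = n / p := h1.symm.trans h2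
    have hd' : d = n / (n / d) := (Nat.div_div_self hdn hn0).symm
    rw [hd', hdp, Nat.div_div_self hpd hn0]
end
end

section
/- Let G be a finite GVZ-group. Then the following are equivalent: (1) G is nested; (2) G is nested by degrees; (3) G is strictly nested by degrees. Moreover, if G is a nested GVZ-group with chain of centers G = X_0 > X_1 > ⋯ > X_n ≥ 1 and 1 = d_0 < d_1 < ⋯ < d_r are the distinct degrees of the irreducible complex characters of G, then r = n and d_i² = |G : X_i| for all 0 ≤ i ≤ r. -/
open CategoryTheory

noncomputable section

/-- A GVZ-group: every irreducible character vanishes off its center. -/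
def IsGVZ (G : Type) [Group G] : Prop :=
  ∀ V : FDRep ℂ G, Simple V → ∀ g : G, g ∉ charCenter V → V.character g = 0

/-- `G` is nested by degrees: `ψ(1) ≤ χ(1)` implies `Z(χ) ≤ Z(ψ)`. -/
def NestedByDegrees (G : Type) [Group G] : Prop :=
  ∀ V W : FDRep ℂ G, Simple V → Simple W → charDegree W ≤ charDegree V →
    charCenter V ⊆ charCenter W

/-- `G` is strictly nested by degrees: nested by degrees, and `ψ(1) < χ(1)` implies
`Z(χ) < Z(ψ)`. -/
def StrictlyNestedByDegrees (G : Type) [Group G] : Prop :=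
  NestedByDegrees G ∧
    ∀ V W : FDRep ℂ G, Simple V → Simple W → charDegree W < charDegree V →
      charCenter V ⊂ charCenter W


open Module Polynomial in
lemma char_inv_aux {G : Type} [Group G] [Fintype G] (V : FDRep ℂ G) (g : G) :
    V.character g⁻¹ = starRingEnd ℂ (V.character g) := by
  classical
  set m := Fintype.card G with hm
  have hm0 : 0 < m := Fintype.card_pos
  set f : Module.End ℂ V := V.ρ g with hf
  have hfm : f ^ m = 1 := by
    rw [hf, ← map_pow, pow_card_eq_one, map_one]
  have hginv : g⁻¹ = g ^ (m - 1) := by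
    have hgm : g ^ m = 1 := pow_card_eq_one
    have : g * g ^ (m - 1) = 1 := by
      rw [← pow_succ', Nat.sub_add_cancel hm0, hgm]
    exact inv_eq_of_mul_eq_one_right this
  -- semisimplicity
  have haev : aeval f (X ^ m - C (1:ℂ)) = 0 := by
    simp [hfm]
  have hsq : Squarefree (X ^ m - C (1:ℂ)) :=
    (Polynomial.separable_X_pow_sub_C 1 (by exact_mod_cast hm0.ne') one_ne_zero).squarefree
  have hss : f.IsFinitelySemisimple :=
    (Module.End.isSemisimple_of_squarefree_aeval_eq_zero hsq haev).isFinitelySemisimple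
  set N : ℂ → Submodule ℂ V := fun μ => f.eigenspace μ with hN
  have hTop : ⨆ μ, N μ = ⊤ := by
    have h1 := Module.End.iSup_maxGenEigenspace_eq_top f
    have h2 : ∀ μ, f.maxGenEigenspace μ = f.eigenspace μ :=
      fun μ => hss.maxGenEigenspace_eq_eigenspace μ
    simpa [hN, h2] using h1
  have hInd : iSupIndep N := f.eigenspaces_iSupIndep
  have hInt : DirectSum.IsInternal N :=
    (DirectSum.isInternal_submodule_iff_iSupIndep_and_iSup_eq_top N).mpr ⟨hInd, hTop⟩
  have hroot : ∀ μ, N μ ≠ ⊥ → μ ^ m = 1 := by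
    intro μ hμ
    have hev : Module.End.HasEigenvalue f μ := hμ
    obtain ⟨v, hv⟩ := hev.exists_hasEigenvector
    have hpow : (f ^ m) v = μ ^ m • v := hv.pow_apply m
    rw [hfm] at hpow
    have h2 : (μ ^ m - 1) • v = 0 := by
      rw [sub_smul, one_smul, ← hpow]; simp
    rcases smul_eq_zero.mp h2 with h | h
    · exact sub_eq_zero.mp h
    · exact absurd h hv.2
  have hFin : {μ | N μ ≠ ⊥}.Finite := by
    refine (Polynomial.finite_setOf_isRoot (p := X ^ m - C (1:ℂ)) ?_).subset ?_
    · intro h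
      have := congrArg (Polynomial.eval 0) h
      simp [zero_pow hm0.ne'] at this
    · intro μ hμ
      simp [Polynomial.IsRoot, hroot μ hμ]
  have hMT : ∀ μ, Set.MapsTo f (N μ) (N μ) := by
    intro μ x hx
    have hx2 : x ∈ N μ := hx
    have hx' : f x = μ • x := Module.End.mem_eigenspace_iff.mp hx2
    have : f x ∈ N μ := hx' ▸ (N μ).smul_mem μ hx2
    exact this
  have hMT' : ∀ μ, Set.MapsTo (f ^ (m - 1)) (N μ) (N μ) :=
    fun μ x hx => Module.End.pow_apply_mem_of_forall_mem (m - 1) (hMT μ) x hx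
  have hresf : ∀ μ, f.restrict (hMT μ) = (μ : ℂ) • (LinearMap.id (R := ℂ) (M := N μ)) := by
    intro μ
    ext v
    have hv : f v = μ • (v : V) := Module.End.mem_eigenspace_iff.mp v.2
    exact hv
  have htrf : LinearMap.trace ℂ V f
      = ∑ μ ∈ hFin.toFinset, μ * (finrank ℂ (N μ) : ℂ) := by
    rw [LinearMap.trace_eq_sum_trace_restrict' hInt hFin hMT]
    refine Finset.sum_congr rfl fun μ _ => ?_
    rw [hresf μ, map_smul, LinearMap.trace_id, smul_eq_mul]
  have htrf' : LinearMap.trace ℂ V (f ^ (m - 1))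
      = ∑ μ ∈ hFin.toFinset, μ ^ (m - 1) * (finrank ℂ (N μ) : ℂ) := by
    rw [LinearMap.trace_eq_sum_trace_restrict' hInt hFin hMT']
    refine Finset.sum_congr rfl fun μ _ => ?_
    have : (f ^ (m - 1)).restrict (hMT' μ) = (f.restrict (hMT μ)) ^ (m - 1) :=
      (Module.End.pow_restrict (m - 1) (hMT μ)).symm
    rw [this, hresf μ, _root_.smul_pow, Module.End.id_pow, map_smul, LinearMap.trace_id, smul_eq_mul]
  have hchar1 : V.character g = LinearMap.trace ℂ V f := rfl
  have hchar2 : V.character g⁻¹ = LinearMap.trace ℂ V (f ^ (m - 1)) := by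
    show LinearMap.trace ℂ V (V.ρ g⁻¹) = _
    rw [hginv, map_pow]
  rw [hchar1, hchar2, htrf, htrf', map_sum]
  refine Finset.sum_congr rfl fun μ hμ => ?_
  have hμm : μ ^ m = 1 := hroot μ (hFin.mem_toFinset.mp hμ)
  have habs : ‖μ‖ = 1 := by
    have := congrArg norm hμm
    rw [norm_pow, norm_one] at this
    rcases (pow_eq_one_iff_of_ne_zero hm0.ne').mp this with h | ⟨h, _⟩
    · exact h
    · nlinarith [norm_nonneg μ]
  have hconj : (starRingEnd ℂ) μ = μ ^ (m - 1) := by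
    rw [← Complex.inv_eq_conj habs]
    exact inv_eq_of_mul_eq_one_right (by rw [← pow_succ', Nat.sub_add_cancel hm0, hμm])
  rw [map_mul, hconj]
  congr 1
  simp


lemma key_count {G : Type} [Group G] [Fintype G] (hGVZ : IsGVZ G) (V : FDRep ℂ G)
    (hV : Simple V) :
    (charCenter V).ncard * (charDegree V) ^ 2 = Fintype.card G := by
  classical
  have hc : (Fintype.card G : ℂ) ≠ 0 := by exact_mod_cast (Fintype.card_pos (α := G)).ne'
  letI : Fintype G := ‹Fintype G›
  haveI hinv : Invertible ((Nat.card G : ℂ)) := invertibleOfNonzero (by rw [Nat.card_eq_fintype_card]; exact hc)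
  have horth := FDRep.char_orthonormal (k := ℂ) (G := G) V V
  rw [if_pos ⟨Iso.refl V⟩] at horth
  have hsum : ∑ g : G, V.character g * V.character g⁻¹ = (Fintype.card G : ℂ) := by
    have := congrArg (fun z => (Fintype.card G : ℂ) * z) horth
    simpa [Nat.card_eq_fintype_card, smul_eq_mul, ← mul_assoc, mul_inv_cancel₀ hc] using this
  set d := charDegree V with hd
  have hchar1 : V.character 1 = (d : ℂ) := by
    rw [FDRep.char_one]; rfl
  have hterm : ∀ g : G, V.character g * V.character g⁻¹ =
      if g ∈ charCenter V then (d : ℂ) ^ 2 else 0 := by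
    intro g
    by_cases hg : g ∈ charCenter V
    · rw [if_pos hg]
      have habs : (‖V.character g‖ : ℂ) = (d : ℂ) := by
        have := hg
        change (‖V.character g‖ : ℂ) = V.character 1 at this
        rw [this, hchar1]
      rw [char_inv_aux, Complex.mul_conj]
      rw [← Complex.sq_norm]
      push_cast
      rw [habs]
    · rw [if_neg hg, hGVZ V hV g hg, zero_mul]
  rw [Finset.sum_congr rfl (fun g _ => hterm g), ← Finset.sum_filter,
    Finset.sum_const, nsmul_eq_mul] at hsum
  have hncard : (charCenter V).ncard = (Finset.univ.filter (· ∈ charCenter V)).card := by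
    rw [Set.ncard_eq_toFinset_card' (charCenter V)]
    congr 1
    ext g
    simp
  rw [hncard]
  have : ((Finset.univ.filter (· ∈ charCenter V)).card * d ^ 2 : ℂ)
      = ((Fintype.card G : ℕ) : ℂ) := by linear_combination hsum
  exact_mod_cast this

/-- for a finite GVZ-group `G`: nested ↔ nested by degrees ↔ strictly nested
by degrees; and if `G` is a nested GVZ-group with chain of centers `X 0 > ⋯ > X n` and
distinct character degrees `1 = d 0 < d 1 < ⋯ < d r`, then `r = n` and
`(d i)² = |G : X i|` for all `i ≤ r`. -/

theorem gvz_nested_equivalences (G : Type) [Group G] [Fintype G] (hGVZ : IsGVZ G) :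
    ((Nested G ↔ NestedByDegrees G) ∧ (Nested G ↔ StrictlyNestedByDegrees G)) ∧
    (Nested G →
      ∀ (n : ℕ) (X : ℕ → Subgroup G), IsChainOfCenters n X →
        ∀ (r : ℕ) (d : ℕ → ℕ), d 0 = 1 → (∀ i < r, d i < d (i + 1)) →
          (∀ i ≤ r, ∃ V : FDRep ℂ G, Simple V ∧ charDegree V = d i) →
          (∀ V : FDRep ℂ G, Simple V → ∃ i ≤ r, charDegree V = d i) →
          r = n ∧ ∀ i ≤ r, (d i) ^ 2 = (X i).index) := by
  classical
  have key : ∀ V : FDRep ℂ G, Simple V →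
      (charCenter V).ncard * (charDegree V) ^ 2 = Fintype.card G :=
    fun V hV => key_count hGVZ V hV
  have cardG_pos : 0 < Fintype.card G := Fintype.card_pos
  have hpos : ∀ V : FDRep ℂ G, Simple V →
      0 < (charCenter V).ncard ∧ 0 < charDegree V := by
    intro V hV
    have h := key V hV
    constructor
    · rcases Nat.eq_zero_or_pos (charCenter V).ncard with h0 | h0
      · rw [h0, zero_mul] at h; omega
      · exact h0
    · rcases Nat.eq_zero_or_pos (charDegree V) with h0 | h0
      · rw [h0] at h; simp at h; omega
      · exact h0
  have sq_le : ∀ a b : ℕ, a ^ 2 ≤ b ^ 2 → a ≤ b := by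
    intro a b h; by_contra hc; push_neg at hc; nlinarith
  -- Z V ⊆ Z W → deg W ≤ deg V
  have hmono : ∀ V W : FDRep ℂ G, Simple V → Simple W → charCenter V ⊆ charCenter W →
      charDegree W ≤ charDegree V := by
    intro V W hV hW hsub
    have h1 := key V hV; have h2 := key W hW
    have hle : (charCenter V).ncard ≤ (charCenter W).ncard :=
      Set.ncard_le_ncard hsub (Set.toFinite _)
    refine sq_le _ _ ?_
    nlinarith [(hpos V hV).1, (hpos W hW).1]
  -- deg equal → ncard equal
  have hcard_eq : ∀ V W : FDRep ℂ G, Simple V → Simple W →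
      charDegree V = charDegree W → (charCenter V).ncard = (charCenter W).ncard := by
    intro V W hV hW hdeg
    have h1 := key V hV; have h2 := key W hW
    rw [hdeg] at h1
    exact Nat.eq_of_mul_eq_mul_right (pow_pos (hpos W hW).2 2) (h1.trans h2.symm)
  have hNBD_of_N : Nested G → NestedByDegrees G := by
    intro hN V W hV hW hdeg
    rcases hN V W hV hW with h | h
    · exact h
    · have h2 : charDegree V ≤ charDegree W := hmono W V hW hV h
      have heq : charDegree V = charDegree W := le_antisymm h2 hdeg
      have hc : (charCenter V).ncard ≤ (charCenter W).ncard :=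
        (hcard_eq V W hV hW heq).le
      have := Set.eq_of_subset_of_ncard_le h hc (Set.toFinite _)
      rw [this]
  have hN_of_NBD : NestedByDegrees G → Nested G := by
    intro hNBD V W hV hW
    rcases le_total (charDegree W) (charDegree V) with h | h
    · exact Or.inl (hNBD V W hV hW h)
    · exact Or.inr (hNBD W V hW hV h)
  have hstrict : Nested G → ∀ V W : FDRep ℂ G, Simple V → Simple W →
      charDegree W < charDegree V → charCenter V ⊂ charCenter W := by
    intro hN V W hV hW hlt
    have hsub : charCenter V ⊆ charCenter W := hNBD_of_N hN V W hV hW hlt.le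
    refine HasSubset.Subset.ssubset_of_ne hsub ?_
    intro hEq
    have h1 := key V hV; have h2 := key W hW
    rw [hEq] at h1
    have : charDegree V ^ 2 = charDegree W ^ 2 :=
      Nat.eq_of_mul_eq_mul_left (hpos W hW).1 (h1.trans h2.symm)
    have : charDegree V = charDegree W := by
      have := sq_le (charDegree V) (charDegree W) this.le
      have h4 := sq_le (charDegree W) (charDegree V) (by omega)
      omega
    omega
  refine ⟨⟨⟨hNBD_of_N, hN_of_NBD⟩,
    ⟨fun hN => ⟨hNBD_of_N hN, hstrict hN⟩, fun hS => hN_of_NBD hS.1⟩⟩, ?_⟩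
  intro _ n X hX r d hd0 hdlt hdex hdall
  obtain ⟨hX0, hXnorm, hXlt, hXex, hXall⟩ := hX
  -- index of X i equals square of degree of any simple with that center
  have index_eq : ∀ (i : ℕ) (V : FDRep ℂ G), Simple V → charCenter V = (X i : Set G) →
      (X i).index = charDegree V ^ 2 := by
    intro i V hV hZ
    have h1 := key V hV
    rw [hZ] at h1
    have h2 : (X i).index * Nat.card (X i) = Nat.card G := Subgroup.index_mul_card (G := G) (H := X i)
    have h3 : ((X i : Set G)).ncard = Nat.card (X i) :=
      (Nat.card_coe_set_eq _).symm
    have h4 : 0 < Nat.card (X i) := Nat.card_pos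
    have h5 : (Nat.card G : ℕ) = Fintype.card G := Nat.card_eq_fintype_card
    refine Nat.eq_of_mul_eq_mul_right h4 ?_
    rw [h2, h5, ← h1, h3, mul_comm]
  -- the two strictly monotone enumerations
  set fI : Fin (n + 1) → ℕ := fun i => (X i).index with hfI
  set gI : Fin (r + 1) → ℕ := fun j => d j ^ 2 with hgI
  have hfmono : StrictMono fI := by
    rw [Fin.strictMono_iff_lt_succ]
    intro i
    obtain ⟨V, hV, hZV⟩ := hXex i (by omega : (i : ℕ) ≤ n)
    obtain ⟨W, hW, hZW⟩ := hXex (i + 1) (by omega : (i : ℕ) + 1 ≤ n)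
    have hlt : X ((i : ℕ) + 1) < X i := hXlt i i.isLt
    have hss : charCenter W ⊂ charCenter V := by
      rw [hZV, hZW]; exact_mod_cast hlt
    have hclt : (charCenter W).ncard < (charCenter V).ncard :=
      Set.ncard_lt_ncard hss (Set.toFinite _)
    have h1 := key V hV; have h2 := key W hW
    have : charDegree V ^ 2 < charDegree W ^ 2 := by
      by_contra hge
      push_neg at hge
      have e1 : (charCenter W).ncard * charDegree W ^ 2
          ≤ (charCenter W).ncard * charDegree V ^ 2 :=
        mul_le_mul_of_nonneg_left hge (Nat.zero_le _)
      have e2 : (charCenter W).ncard * charDegree V ^ 2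
          < (charCenter V).ncard * charDegree V ^ 2 :=
        mul_lt_mul_of_pos_right hclt (pow_pos (hpos V hV).2 2)
      omega
    have e1 := index_eq i V hV hZV
    have e2 := index_eq ((i : ℕ) + 1) W hW hZW
    simpa [hfI, Fin.coe_castSucc, Fin.val_succ, e1, e2] using this
  have hdmono : StrictMono gI := by
    rw [Fin.strictMono_iff_lt_succ]
    intro j
    have : d (j : ℕ) < d ((j : ℕ) + 1) := hdlt j j.isLt
    have h0 : 0 < 2 := by norm_num
    simpa [hgI, Fin.coe_castSucc, Fin.val_succ] using
      Nat.pow_lt_pow_left this (by norm_num)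
  have hrangefg : ∀ i : Fin (n + 1), ∃ j : Fin (r + 1), fI i = gI j := by
    intro i
    obtain ⟨V, hV, hZV⟩ := hXex i (by omega : (i : ℕ) ≤ n)
    obtain ⟨j, hj, hdj⟩ := hdall V hV
    exact ⟨⟨j, by omega⟩, by simp [hfI, hgI, index_eq i V hV hZV, hdj]⟩
  have hrangegf : ∀ j : Fin (r + 1), ∃ i : Fin (n + 1), gI j = fI i := by
    intro j
    obtain ⟨V, hV, hdV⟩ := hdex j (by omega : (j : ℕ) ≤ r)
    obtain ⟨i, hi, hZV⟩ := hXall V hV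
    exact ⟨⟨i, by omega⟩, by simp [hfI, hgI, index_eq i V hV hZV, hdV]⟩
  set s : Finset ℕ := Finset.univ.image fI with hs
  have hsg : s = Finset.univ.image gI := by
    ext a
    simp only [hs, Finset.mem_image, Finset.mem_univ, true_and]
    constructor
    · rintro ⟨i, rfl⟩; obtain ⟨j, hj⟩ := hrangefg i; exact ⟨j, hj.symm⟩
    · rintro ⟨j, rfl⟩; obtain ⟨i, hi⟩ := hrangegf j; exact ⟨i, hi.symm⟩
  have hcards : s.card = n + 1 := by
    rw [hs, Finset.card_image_of_injective _ hfmono.injective, Finset.card_univ,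
      Fintype.card_fin]
  have hcards' : s.card = r + 1 := by
    rw [hsg, Finset.card_image_of_injective _ hdmono.injective, Finset.card_univ,
      Fintype.card_fin]
  have hrn : r = n := by omega
  subst hrn
  refine ⟨rfl, ?_⟩
  have hf_eq : fI = s.orderEmbOfFin hcards :=
    Finset.orderEmbOfFin_unique hcards
      (fun i => by rw [hs]; exact Finset.mem_image_of_mem _ (Finset.mem_univ i)) hfmono
  have hg_eq : gI = s.orderEmbOfFin hcards :=
    Finset.orderEmbOfFin_unique hcards
      (fun j => by rw [hsg]; exact Finset.mem_image_of_mem _ (Finset.mem_univ j)) hdmono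
  intro i hi
  have : gI ⟨i, by omega⟩ = fI ⟨i, by omega⟩ := by rw [hf_eq, hg_eq]
  simpa [hfI, hgI] using this
end
end
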